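/- Let W be a non-identity element of the Apollonian group Ap, and suppose j ∈ {1,2,3,4} is such that W = S_j·W' where W' ∈ Ap has strictly smaller word length than W with respect to the generating set {S₁,S₂,S₃,S₄} (i.e. S_j is the leftmost letter of the reduced word for W). Write the j-th row of the matrix W·S_θ as (−t, u, v, w). Then t > 0, u > 0, and w > 0. -/

import Mathlib

open Matrix

/-- The Apollonian generators, indexed by `Fin 4`. -/
def S : Fin 4 → Matrix (Fin 4) (Fin 4) ℤ :=
  ![!![-1,2,2,2; 0,1,0,0; 0,0,1,0; 0,0,0,1],
    !![1,0,0,0; 2,-1,2,2; 0,0,1,0; 0,0,0,1],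
    !![1,0,0,0; 0,1,0,0; 2,2,-1,2; 0,0,0,1],
    !![1,0,0,0; 0,1,0,0; 0,0,1,0; 2,2,2,-1]]

/-- The Apollonian group: since each generator is an involution, the subgroup
generated by `S₁, S₂, S₃, S₄` consists of all finite products of the generators. -/
def Ap : Submonoid (Matrix (Fin 4) (Fin 4) ℤ) :=
  Submonoid.closure {S 0, S 1, S 2, S 3}

/-- The word length of an element of the Apollonian group with respect to the
generating set `{S₁, S₂, S₃, S₄}`: the least number of generators whose product
is the given matrix. -/
noncomputable def wordLength (W : Matrix (Fin 4) (Fin 4) ℤ) : ℕ :=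
  sInf {k | ∃ f : Fin k → Fin 4, W = (List.ofFn fun i => S (f i)).prod}

/-- The matrix `S_θ` implementing `θ`. -/
def Sθ : Matrix (Fin 4) (Fin 4) ℤ := !![1,0,0,0; -1,1,0,0; -1,0,0,1; -1,1,-1,1]

/- ## Auxiliary machinery -/

lemma S_mul_apply (j : Fin 4) (N : Matrix (Fin 4) (Fin 4) ℤ) (i c : Fin 4) :
    (S j * N) i c = if i = j then 2*(N 0 c + N 1 c + N 2 c + N 3 c) - 3 * N j c else N i c := by
  rw [Matrix.mul_apply, Fin.sum_univ_four]
  fin_cases j <;> fin_cases i <;> simp [S, Matrix.vecHead, Matrix.vecTail] <;> ring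

set_option maxHeartbeats 1000000 in
lemma S_invol (j : Fin 4) : S j * S j = 1 := by
  ext i c
  rw [S_mul_apply, Matrix.one_apply]
  fin_cases j <;> fin_cases i <;> fin_cases c <;>
    norm_num [S, Matrix.vecHead, Matrix.vecTail, Fin.ext_iff] <;> decide

/-- The key column invariant: the `j`-th entry is at least `1` and dominates
all entries, and any two distinct entries have nonnegative sum. -/
def ApInv (v : Fin 4 → ℤ) (j : Fin 4) : Prop :=
  1 ≤ v j ∧ (∀ i, v i ≤ v j) ∧ (∀ i i' : Fin 4, i ≠ i' → 0 ≤ v i + v i')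

lemma sum_pair_le (v : Fin 4 → ℤ) (j k : Fin 4) (hjk : j ≠ k)
    (h3 : ∀ i i' : Fin 4, i ≠ i' → 0 ≤ v i + v i') :
    v j + v k ≤ v 0 + v 1 + v 2 + v 3 := by
  have h01 := h3 0 1 (by decide)
  have h02 := h3 0 2 (by decide)
  have h03 := h3 0 3 (by decide)
  have h12 := h3 1 2 (by decide)
  have h13 := h3 1 3 (by decide)
  have h23 := h3 2 3 (by decide)
  fin_cases j <;> fin_cases k <;>
    first
      | exact absurd rfl hjk
      | (show v 0 + v 1 ≤ v 0 + v 1 + v 2 + v 3; omega)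
      | (show v 0 + v 2 ≤ v 0 + v 1 + v 2 + v 3; omega)
      | (show v 0 + v 3 ≤ v 0 + v 1 + v 2 + v 3; omega)
      | (show v 1 + v 0 ≤ v 0 + v 1 + v 2 + v 3; omega)
      | (show v 1 + v 2 ≤ v 0 + v 1 + v 2 + v 3; omega)
      | (show v 1 + v 3 ≤ v 0 + v 1 + v 2 + v 3; omega)
      | (show v 2 + v 0 ≤ v 0 + v 1 + v 2 + v 3; omega)
      | (show v 2 + v 1 ≤ v 0 + v 1 + v 2 + v 3; omega)
      | (show v 2 + v 3 ≤ v 0 + v 1 + v 2 + v 3; omega)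
      | (show v 3 + v 0 ≤ v 0 + v 1 + v 2 + v 3; omega)
      | (show v 3 + v 1 ≤ v 0 + v 1 + v 2 + v 3; omega)
      | (show v 3 + v 2 ≤ v 0 + v 1 + v 2 + v 3; omega)

lemma ApInv_step (v w : Fin 4 → ℤ) (j k : Fin 4) (hjk : j ≠ k) (h : ApInv v k)
    (hw : ∀ i, w i = if i = j then 2*(v 0 + v 1 + v 2 + v 3) - 3 * v j else v i) :
    ApInv w j := by
  obtain ⟨h1, h2, h3⟩ := h
  have hsum := sum_pair_le v j k hjk h3
  have hwj : v k ≤ w j := by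
    rw [hw j, if_pos rfl]
    have := h2 j
    omega
  refine ⟨by omega, ?_, ?_⟩
  · intro i
    by_cases hi : i = j
    · subst hi; exact le_refl _
    · rw [hw i, if_neg hi]
      exact le_trans (h2 i) hwj
  · intro i i' hne
    by_cases hi : i = j <;> by_cases hi' : i' = j
    · exact absurd (hi.trans hi'.symm) hne
    · subst hi
      rw [hw i', if_neg hi']
      by_cases hk : i' = k
      · subst hk; omega
      · have := h3 k i' (Ne.symm hk)
        omega
    · subst hi'
      rw [hw i, if_neg hi]
      by_cases hk : i = k
      · subst hk; omega
      · have := h3 k i (Ne.symm hk)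
        omega
    · rw [hw i, if_neg hi, hw i', if_neg hi']
      exact h3 i i' hne

/-- The matrix-level invariant: the invariant holds for the negated column 0,
for column 1 and for column 3. -/
def ApInvM (M : Matrix (Fin 4) (Fin 4) ℤ) (j : Fin 4) : Prop :=
  ApInv (fun i => -(M i 0)) j ∧ ApInv (fun i => M i 1) j ∧ ApInv (fun i => M i 3) j

instance (v : Fin 4 → ℤ) (j : Fin 4) : Decidable (ApInv v j) := by
  unfold ApInv; infer_instance

instance (M : Matrix (Fin 4) (Fin 4) ℤ) (j : Fin 4) : Decidable (ApInvM M j) := by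
  unfold ApInvM; infer_instance

lemma ApInvM_step (j k : Fin 4) (hjk : j ≠ k) (N : Matrix (Fin 4) (Fin 4) ℤ)
    (h : ApInvM N k) : ApInvM (S j * N) j := by
  obtain ⟨hc0, hc1, hc3⟩ := h
  refine ⟨ApInv_step _ _ j k hjk hc0 ?_, ApInv_step _ _ j k hjk hc1 ?_,
    ApInv_step _ _ j k hjk hc3 ?_⟩
  · intro i
    simp only [S_mul_apply]
    by_cases hi : i = j
    · subst hi
      simp only [if_pos rfl, if_true]
      ring
    · simp only [if_neg hi]
  · intro i
    simp only [S_mul_apply]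
  · intro i
    simp only [S_mul_apply]

set_option maxHeartbeats 1000000 in
lemma ApInvM_base (j : Fin 4) : ApInvM (S j * Sθ) j := by
  have h0 : S 0 * Sθ = !![-7,4,-2,4; -1,1,0,0; -1,0,0,1; -1,1,-1,1] := by
    ext i c
    rw [S_mul_apply]
    fin_cases i <;> fin_cases c <;> simp [S, Sθ, Matrix.vecHead, Matrix.vecTail, Fin.ext_iff] <;> decide
  have h1 : S 1 * Sθ = !![1,0,0,0; -1,1,-2,4; -1,0,0,1; -1,1,-1,1] := by
    ext i c
    rw [S_mul_apply]
    fin_cases i <;> fin_cases c <;> simp [S, Sθ, Matrix.vecHead, Matrix.vecTail, Fin.ext_iff] <;> decide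
  have h2 : S 2 * Sθ = !![1,0,0,0; -1,1,0,0; -1,4,-2,1; -1,1,-1,1] := by
    ext i c
    rw [S_mul_apply]
    fin_cases i <;> fin_cases c <;> simp [S, Sθ, Matrix.vecHead, Matrix.vecTail, Fin.ext_iff] <;> decide
  have h3 : S 3 * Sθ = !![1,0,0,0; -1,1,0,0; -1,0,0,1; -1,1,1,1] := by
    ext i c
    rw [S_mul_apply]
    fin_cases i <;> fin_cases c <;> simp [S, Sθ, Matrix.vecHead, Matrix.vecTail, Fin.ext_iff] <;> decide
  fin_cases j
  · rw [show S ⟨0, by norm_num⟩ = S 0 from rfl, h0]; decide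
  · rw [show S ⟨1, by norm_num⟩ = S 1 from rfl, h1]; decide
  · rw [show S ⟨2, by norm_num⟩ = S 2 from rfl, h2]; decide
  · rw [show S ⟨3, by norm_num⟩ = S 3 from rfl, h3]; decide

lemma S_mem_Ap (g : Fin 4) : S g ∈ Ap := by
  apply Submonoid.subset_closure
  fin_cases g <;> simp

lemma prod_mem_Ap (l : List (Fin 4)) : (l.map S).prod ∈ Ap := by
  apply Submonoid.list_prod_mem
  intro x hx
  rw [List.mem_map] at hx
  obtain ⟨g, _, rfl⟩ := hx
  exact S_mem_Ap g

lemma ofFn_map_eq (l : List (Fin 4)) :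
    (List.ofFn fun i => S (l.get i)) = l.map S := by
  conv_rhs => rw [← List.ofFn_get l]
  rw [List.map_ofFn]
  rfl

lemma wordLength_le (l : List (Fin 4)) : wordLength ((l.map S).prod) ≤ l.length := by
  apply Nat.sInf_le
  exact ⟨fun i => l.get i, by rw [ofFn_map_eq]⟩

lemma exists_min_rep (W : Matrix (Fin 4) (Fin 4) ℤ) (h : W ∈ Ap) :
    ∃ l : List (Fin 4), W = (l.map S).prod ∧ l.length = wordLength W := by
  have hne : {k | ∃ f : Fin k → Fin 4, W = (List.ofFn fun i => S (f i)).prod}.Nonempty := by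
    have : ∃ l : List (Fin 4), W = (l.map S).prod := by
      refine Submonoid.closure_induction ?_ ?_ ?_ h
      · intro x hx
        simp only [Set.mem_insert_iff, Set.mem_singleton_iff] at hx
        rcases hx with rfl | rfl | rfl | rfl
        · exact ⟨[0], by simp⟩
        · exact ⟨[1], by simp⟩
        · exact ⟨[2], by simp⟩
        · exact ⟨[3], by simp⟩
      · exact ⟨[], by simp⟩
      · rintro x y _ _ ⟨l1, rfl⟩ ⟨l2, rfl⟩
        exact ⟨l1 ++ l2, by simp⟩
    obtain ⟨l, hl⟩ := this
    exact ⟨l.length, fun i => l.get i, by rw [ofFn_map_eq]; exact hl⟩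
  have hmem := Nat.sInf_mem hne
  obtain ⟨f, hf⟩ := hmem
  refine ⟨List.ofFn f, ?_, by simp [wordLength]⟩
  rw [List.map_ofFn]
  exact hf

lemma key : ∀ n (W' : Matrix (Fin 4) (Fin 4) ℤ) (j : Fin 4), W' ∈ Ap → wordLength W' = n →
    wordLength W' < wordLength (S j * W') → ApInvM ((S j * W') * Sθ) j := by
  intro n
  induction n using Nat.strong_induction_on with
  | _ n IH =>
    intro W' j hW' hlen hlt
    obtain ⟨l, hWl, hllen⟩ := exists_min_rep W' hW'
    cases l with
    | nil =>
      simp only [List.map_nil, List.prod_nil] at hWl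
      subst hWl
      rw [mul_one]
      exact ApInvM_base j
    | cons k t =>
      simp only [List.map_cons, List.prod_cons] at hWl
      set W'' : Matrix (Fin 4) (Fin 4) ℤ := (t.map S).prod with hW''
      have hlen'' : wordLength W'' ≤ t.length := wordLength_le t
      have hlenW' : wordLength W' = t.length + 1 := by
        have := hllen
        simp only [List.length_cons] at this
        omega
      have hkj : k ≠ j := by
        intro hkj
        subst hkj
        have : S k * W' = W'' := by
          rw [hWl, ← mul_assoc, S_invol, one_mul]
        rw [this] at hlt
        omega
      have hW''Ap : W'' ∈ Ap := prod_mem_Ap t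
      have hIH : ApInvM ((S k * W'') * Sθ) k := by
        apply IH (wordLength W'') (by omega) W'' k hW''Ap rfl
        rw [← hWl]
        omega
      rw [← hWl] at hIH
      rw [mul_assoc]
      exact ApInvM_step j k (Ne.symm hkj) (W' * Sθ) hIH

/-- If `W ≠ 1` is in the Apollonian group and its reduced word starts with
`S_j`, then the coefficient quadruple `(t,u,v,w)` read off from row `j` of
`W·S_θ` (whose row is `(−t,u,v,w)`) has `t > 0`, `u > 0`, `w > 0`. -/
theorem coefficient_quadruple_positivity
    (W W' : Matrix (Fin 4) (Fin 4) ℤ) (j : Fin 4)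
    (hW : W ∈ Ap) (hW' : W' ∈ Ap) (hne : W ≠ 1)
    (hfac : W = S j * W') (hlen : wordLength W' < wordLength W) :
    (W * Sθ) j 0 < 0 ∧ 0 < (W * Sθ) j 1 ∧ 0 < (W * Sθ) j 3 := by
  subst hfac
  obtain ⟨⟨a1, _, _⟩, ⟨b1, _, _⟩, ⟨c1, _, _⟩⟩ := key (wordLength W') W' j hW' rfl hlen
  simp only at a1 b1 c1
  exact ⟨by omega, by omega, by omega⟩
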